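/- Let Q : ℝ³ → M₄(ℂ) be measurable with |Q(x)_{jk}| ≤ C_q ⟨x⟩^{-ρ} for all x and all j,k (with C_q > 0, ρ > 1), and let f : ℝ³ → ℂ⁴ be measurable with |f(x)| ≤ C_f ⟨x⟩^{-2} for all x. Then there is a constant C > 0, depending only on C_f, C_q and ρ, such that for every R₀ > 0, every r ≥ 2R₀ and every ω ∈ ℝ³ with |ω| = 1, | ∫_{E₃} α·( ω − (ω − r⁻¹y)/|ω − r⁻¹y|³ ) Q(y) f(y) dy | ≤ C R₀^{−ρ+1}, where E₃ = { y ∈ ℝ³ : |y| > R₀ and |rω − y| > r/2 }. -/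

import Mathlib

open MeasureTheory Real Filter

noncomputable section

abbrev R3 := EuclideanSpace ℝ (Fin 3)
abbrev C4 := EuclideanSpace ℂ (Fin 4)
abbrev C2 := EuclideanSpace ℂ (Fin 2)

/-- The Pauli matrices. -/
def pauli : Fin 3 → Matrix (Fin 2) (Fin 2) ℂ
  | 0 => !![0, 1; 1, 0]
  | 1 => !![0, -Complex.I; Complex.I, 0]
  | 2 => !![1, 0; 0, -1]

/-- The Dirac matrices `α_j`. -/
def dirac (j : Fin 3) : Matrix (Fin 4) (Fin 4) ℂ :=
  Matrix.reindex finSumFinEquiv finSumFinEquiv (Matrix.fromBlocks 0 (pauli j) (pauli j) 0)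

/-- `σ · x` for `x ∈ ℝ³`. -/
def pauliDot (x : R3) : Matrix (Fin 2) (Fin 2) ℂ :=
  ∑ j, (x j : ℂ) • pauli j

/-- `α · x` for `x ∈ ℝ³`. -/
def alphaDot (x : R3) : Matrix (Fin 4) (Fin 4) ℂ :=
  ∑ j, (x j : ℂ) • dirac j

/-- Action of a 4×4 complex matrix on `ℂ⁴` (with the Euclidean norm). -/
def mulVec4 (M : Matrix (Fin 4) (Fin 4) ℂ) (v : C4) : C4 :=
  (WithLp.equiv 2 (Fin 4 → ℂ)).symm (M.mulVec ((WithLp.equiv 2 (Fin 4 → ℂ)) v))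

/-- Action of a 2×2 complex matrix on `ℂ²` (with the Euclidean norm). -/
def mulVec2 (M : Matrix (Fin 2) (Fin 2) ℂ) (v : C2) : C2 :=
  (WithLp.equiv 2 (Fin 2 → ℂ)).symm (M.mulVec ((WithLp.equiv 2 (Fin 2 → ℂ)) v))

/-- The Japanese bracket `⟨x⟩ = √(1+|x|²)`. -/
def jb (x : R3) : ℝ := Real.sqrt (1 + ‖x‖ ^ 2)

/-- Cross product on `ℝ³`. -/
def cross3 (a b : R3) : R3 :=
  (WithLp.equiv 2 (Fin 3 → ℝ)).symm
    ![a 1 * b 2 - a 2 * b 1, a 2 * b 0 - a 0 * b 2, a 0 * b 1 - a 1 * b 0]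


lemma dirac_entry_le (j : Fin 3) (a b : Fin 4) : ‖dirac j a b‖ ≤ 1 := by
  fin_cases j <;> fin_cases a <;> fin_cases b <;>
    norm_num [dirac, pauli, Matrix.fromBlocks, finSumFinEquiv, Fin.addCases,
      Matrix.reindex_apply, Matrix.submatrix_apply, Fin.subNat, Fin.castLT,
      Matrix.cons_val_zero, Matrix.cons_val_one]

lemma coord_le_norm {𝕜 : Type*} [RCLike 𝕜] {ι : Type*} [Fintype ι]
    (x : EuclideanSpace 𝕜 ι) (i : ι) : ‖x i‖ ≤ ‖x‖ := by
  rw [EuclideanSpace.norm_eq]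
  have h : ‖x i‖ ^ 2 ≤ ∑ j, ‖x j‖ ^ 2 :=
    Finset.single_le_sum (f := fun j => ‖x j‖ ^ 2) (fun j _ => sq_nonneg _) (Finset.mem_univ i)
  calc ‖x i‖ = Real.sqrt (‖x i‖ ^ 2) := (Real.sqrt_sq (norm_nonneg _)).symm
    _ ≤ _ := Real.sqrt_le_sqrt h

lemma jb_pos (x : R3) : 0 < jb x := by
  have : (0:ℝ) < 1 + ‖x‖ ^ 2 := by positivity
  exact Real.sqrt_pos.2 this

lemma norm_le_jb (x : R3) : ‖x‖ ≤ jb x := by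
  have : ‖x‖ = Real.sqrt (‖x‖ ^ 2) := (Real.sqrt_sq (norm_nonneg _)).symm
  rw [this, jb]
  exact Real.sqrt_le_sqrt (by linarith)

lemma norm_le_of_coords (w : C4) (c : ℝ) (h : ∀ i, ‖w i‖ ≤ c) : ‖w‖ ≤ 2 * c := by
  have hc : 0 ≤ c := (norm_nonneg _).trans (h 0)
  rw [EuclideanSpace.norm_eq]
  have h1 : ∑ i, ‖w i‖ ^ 2 ≤ (2 * c) ^ 2 := by
    have : ∀ i : Fin 4, ‖w i‖ ^ 2 ≤ c ^ 2 := fun i => pow_le_pow_left₀ (norm_nonneg _) (h i) 2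
    calc ∑ i, ‖w i‖ ^ 2 ≤ ∑ _i : Fin 4, c ^ 2 := Finset.sum_le_sum fun i _ => this i
      _ = (2 * c) ^ 2 := by simp [Finset.sum_const]; ring
  calc Real.sqrt (∑ i, ‖w i‖ ^ 2) ≤ Real.sqrt ((2 * c) ^ 2) := Real.sqrt_le_sqrt h1
    _ = 2 * c := Real.sqrt_sq (by positivity)

lemma mulVec4_apply (M : Matrix (Fin 4) (Fin 4) ℂ) (v : C4) (a : Fin 4) :
    mulVec4 M v a = ∑ b, M a b * v b := by
  simp only [mulVec4, Matrix.mulVec, dotProduct]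
  rfl

lemma mulVec4_norm_le (M : Matrix (Fin 4) (Fin 4) ℂ) (c : ℝ)
    (hM : ∀ a b, ‖M a b‖ ≤ c) (v : C4) : ‖mulVec4 M v‖ ≤ 8 * c * ‖v‖ := by
  have hc : 0 ≤ c := (norm_nonneg _).trans (hM 0 0)
  have hcoord : ∀ a : Fin 4, ‖mulVec4 M v a‖ ≤ 4 * (c * ‖v‖) := by
    intro a
    rw [mulVec4_apply]
    calc ‖∑ b, M a b * v b‖ ≤ ∑ b, ‖M a b * v b‖ := norm_sum_le _ _
      _ ≤ ∑ _b : Fin 4, c * ‖v‖ := by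
          refine Finset.sum_le_sum fun b _ => ?_
          rw [norm_mul]
          exact mul_le_mul (hM a b) (coord_le_norm v b) (norm_nonneg _) hc
      _ = 4 * (c * ‖v‖) := by simp [Finset.sum_const]
  have := norm_le_of_coords (mulVec4 M v) (4 * (c * ‖v‖)) hcoord
  linarith

lemma alphaDot_entry_le (v : R3) (a b : Fin 4) :
    ‖alphaDot v a b‖ ≤ 3 * ‖v‖ := by
  have : alphaDot v a b = ∑ j, (v j : ℂ) * dirac j a b := by
    simp [alphaDot, Matrix.sum_apply]
  rw [this]
  calc ‖∑ j, (v j : ℂ) * dirac j a b‖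
      ≤ ∑ j, ‖(v j : ℂ) * dirac j a b‖ := by
        simpa using norm_sum_le Finset.univ (fun j => (v j : ℂ) * dirac j a b)
    _ ≤ ∑ _j : Fin 3, ‖v‖ * 1 := by
        refine Finset.sum_le_sum fun j _ => ?_
        rw [norm_mul]
        refine mul_le_mul ?_ (dirac_entry_le j a b) (norm_nonneg _) (norm_nonneg _)
        simpa using coord_le_norm v j
    _ = 3 * ‖v‖ := by simp [Finset.sum_const]

lemma alphaDot_mulVec_le (v : R3) (w : C4) :
    ‖mulVec4 (alphaDot v) w‖ ≤ 24 * ‖v‖ * ‖w‖ := by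
  have := mulVec4_norm_le (alphaDot v) (3 * ‖v‖) (alphaDot_entry_le v) w
  nlinarith [norm_nonneg v, norm_nonneg w]

lemma radial_integral (ρ R₀ : ℝ) (hρ : 1 < ρ) (hR : 0 < R₀) :
    ∫ y in {y : R3 | R₀ < ‖y‖}, ‖y‖ ^ (-(ρ + 2)) =
      3 * (volume (Metric.ball (0 : R3) 1)).toReal * (R₀ ^ (-ρ + 1) / (ρ - 1)) := by
  have hT : MeasurableSet {y : R3 | R₀ < ‖y‖} :=
    (isOpen_lt continuous_const continuous_norm).measurableSet
  have h := MeasureTheory.integral_fun_norm_addHaar (volume : Measure R3)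
    (Set.indicator (Set.Ioi R₀) fun s => s ^ (-(ρ + 2)))
  have hdim : Module.finrank ℝ R3 = 3 := finrank_euclideanSpace_fin
  rw [hdim] at h
  have hL : (fun x : R3 => Set.indicator (Set.Ioi R₀) (fun s => s ^ (-(ρ + 2))) ‖x‖)
      = Set.indicator {y : R3 | R₀ < ‖y‖} fun y => ‖y‖ ^ (-(ρ + 2)) := by
    funext x
    by_cases hx : R₀ < ‖x‖ <;> simp [Set.indicator, hx, Set.mem_Ioi]
  rw [hL, integral_indicator hT] at h
  rw [h]
  have hR2 : (fun y : ℝ => y ^ (3 - 1) • Set.indicator (Set.Ioi R₀) (fun s => s ^ (-(ρ + 2))) y)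
      = Set.indicator (Set.Ioi R₀) fun y => y ^ (2:ℕ) * y ^ (-(ρ + 2)) := by
    funext y
    by_cases hy : y ∈ Set.Ioi R₀ <;> simp [Set.indicator, hy, smul_eq_mul]
  rw [hR2, setIntegral_indicator measurableSet_Ioi]
  rw [show Set.Ioi (0:ℝ) ∩ Set.Ioi R₀ = Set.Ioi R₀ from
    Set.inter_eq_self_of_subset_right (Set.Ioi_subset_Ioi hR.le)]
  have hcong : ∫ y in Set.Ioi R₀, y ^ (2:ℕ) * y ^ (-(ρ + 2)) = ∫ y in Set.Ioi R₀, y ^ (-ρ) := by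
    refine setIntegral_congr_fun measurableSet_Ioi fun y hy => ?_
    have hy0 : (0:ℝ) < y := hR.trans hy
    rw [← Real.rpow_natCast y 2, ← Real.rpow_add hy0]
    norm_num
  rw [hcong, integral_Ioi_rpow_of_lt (by linarith) hR]
  simp only [smul_eq_mul, nsmul_eq_mul, Nat.cast_ofNat]
  have h1 : ρ - 1 ≠ 0 := by intro h; linarith [hρ]
  have h2 : -ρ + 1 ≠ 0 := by intro h; linarith [hρ]
  field_simp
  simp only [Measure.real]
  ring


/-- Estimate (2.22) of Saitō–Umeda. -/
theorem integral_estimate_outer_region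
    (Q : R3 → Matrix (Fin 4) (Fin 4) ℂ) (hQmeas : ∀ j k, Measurable (fun x => Q x j k))
    (Cq ρ : ℝ) (hCq : 0 < Cq) (hρ : 1 < ρ)
    (hQ : ∀ x, ∀ j k, ‖Q x j k‖ ≤ Cq * jb x ^ (-ρ))
    (f : R3 → C4) (hf_meas : StronglyMeasurable f)
    (Cf : ℝ) (hf_bd : ∀ x, ‖f x‖ ≤ Cf * jb x ^ (-(2:ℝ))) :
    ∃ C > 0, ∀ R₀ : ℝ, 0 < R₀ → ∀ r : ℝ, 2 * R₀ ≤ r → ∀ ω : R3, ‖ω‖ = 1 →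
      ‖∫ y in {y : R3 | R₀ < ‖y‖ ∧ r / 2 < ‖r • ω - y‖},
          mulVec4 (alphaDot (ω - (‖ω - r⁻¹ • y‖ ^ 3)⁻¹ • (ω - r⁻¹ • y)))
            (mulVec4 (Q y) (f y))‖ ≤ C * R₀ ^ (-ρ + 1) := by
  have hCf : 0 ≤ Cf := by
    nlinarith [hf_bd 0, norm_nonneg (f 0), Real.rpow_pos_of_pos (jb_pos 0) (-(2:ℝ))]
  set V : ℝ := (volume (Metric.ball (0 : R3) 1)).toReal with hV
  have hV0 : 0 ≤ V := ENNReal.toReal_nonneg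
  set K : ℝ := 960 * Cq * Cf with hKdef
  have hK0 : 0 ≤ K := by positivity
  have hA0 : 0 ≤ K * (3 * V / (ρ - 1)) := by
    apply mul_nonneg hK0
    apply div_nonneg (by linarith) (by linarith)
  refine ⟨K * (3 * V / (ρ - 1)) + 1, by linarith, ?_⟩
  intro R₀ hR r hr ω hω
  have hr0 : (0:ℝ) < r := by linarith
  set S := {y : R3 | R₀ < ‖y‖ ∧ r / 2 < ‖r • ω - y‖} with hSdef
  set T := {y : R3 | R₀ < ‖y‖} with hTdef
  have hT : MeasurableSet T := (isOpen_lt continuous_const continuous_norm).measurableSet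
  have hS : MeasurableSet S := by
    have : S = {y : R3 | R₀ < ‖y‖} ∩ {y : R3 | r / 2 < ‖r • ω - y‖} := rfl
    rw [this]
    exact hT.inter
      (isOpen_lt continuous_const ((continuous_const.sub continuous_id).norm)).measurableSet
  have hSsub : S ⊆ T := fun y hy => hy.1
  -- integrability of the comparison function
  have hbase : Integrable (fun y : R3 => (1 + ‖y‖) ^ (-(ρ + 2))) volume := by
    apply integrable_one_add_norm
    rw [finrank_euclideanSpace_fin]
    push_cast
    linarith
  have hIT : IntegrableOn (fun y : R3 => ‖y‖ ^ (-(ρ + 2))) T := by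
    refine Integrable.mono'
      ((hbase.const_mul (((1 + R₀) / R₀) ^ (ρ + 2))).restrict (s := T)) ?_ ?_
    · exact ((continuous_norm.continuousOn (s := T)).rpow_const
        (fun y hy => Or.inl (ne_of_gt (hR.trans hy)))).aestronglyMeasurable hT
    · filter_upwards [ae_restrict_mem hT] with y hy
      have hy0 : (0:ℝ) < ‖y‖ := hR.trans hy
      rw [Real.norm_of_nonneg (Real.rpow_nonneg (norm_nonneg y) _)]
      have hyR : R₀ < ‖y‖ := hy
      have key : R₀ / (1 + R₀) * (1 + ‖y‖) ≤ ‖y‖ := by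
        rw [div_mul_eq_mul_div, div_le_iff₀ (by linarith)]
        nlinarith [hyR.le]
      have hq : (0:ℝ) < R₀ / (1 + R₀) := by positivity
      calc ‖y‖ ^ (-(ρ + 2)) ≤ (R₀ / (1 + R₀) * (1 + ‖y‖)) ^ (-(ρ + 2)) :=
            Real.rpow_le_rpow_of_nonpos (by positivity) key (by linarith)
        _ = ((1 + R₀) / R₀) ^ (ρ + 2) * (1 + ‖y‖) ^ (-(ρ + 2)) := by
            rw [Real.mul_rpow hq.le (by positivity), Real.rpow_neg hq.le,
              ← Real.inv_rpow hq.le, inv_div]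
  have hIS : IntegrableOn (fun y : R3 => ‖y‖ ^ (-(ρ + 2))) S := hIT.mono_set hSsub
  -- pointwise bound on S
  have hpt : ∀ y ∈ S,
      ‖mulVec4 (alphaDot (ω - (‖ω - r⁻¹ • y‖ ^ 3)⁻¹ • (ω - r⁻¹ • y)))
        (mulVec4 (Q y) (f y))‖ ≤ K * ‖y‖ ^ (-(ρ + 2)) := by
    intro y hy
    obtain ⟨hy1, hy2⟩ := hy
    set z := ω - r⁻¹ • y with hz
    have hzn : ‖z‖ = r⁻¹ * ‖r • ω - y‖ := by
      have hzz : z = r⁻¹ • (r • ω - y) := by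
        rw [hz, smul_sub, smul_smul, inv_mul_cancel₀ hr0.ne', one_smul]
      rw [hzz, norm_smul, Real.norm_eq_abs, abs_of_pos (inv_pos.2 hr0)]
    have hzhalf : (1:ℝ)/2 ≤ ‖z‖ := by
      have h12 : (1:ℝ)/2 = r⁻¹ * (r/2) := by field_simp
      rw [hzn, h12]
      exact mul_le_mul_of_nonneg_left hy2.le (inv_pos.2 hr0).le
    have hz0 : (0:ℝ) < ‖z‖ := lt_of_lt_of_le (by norm_num) hzhalf
    have hv : ‖ω - (‖z‖ ^ 3)⁻¹ • z‖ ≤ 5 := by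
      have h1 : ‖(‖z‖ ^ 3)⁻¹ • z‖ = (‖z‖ ^ 2)⁻¹ := by
        rw [norm_smul, Real.norm_eq_abs, abs_of_pos (by positivity)]
        field_simp
      have h2 : (‖z‖ ^ 2)⁻¹ ≤ 4 := by
        have h14 : (1:ℝ)/4 ≤ ‖z‖ ^ 2 := by nlinarith
        have h44 := inv_anti₀ (by norm_num : (0:ℝ) < 1/4) h14
        simpa using h44
      calc ‖ω - (‖z‖ ^ 3)⁻¹ • z‖ ≤ ‖ω‖ + ‖(‖z‖ ^ 3)⁻¹ • z‖ := norm_sub_le _ _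
        _ = 1 + (‖z‖ ^ 2)⁻¹ := by rw [hω, h1]
        _ ≤ 5 := by linarith
    have hw2 : ‖mulVec4 (Q y) (f y)‖ ≤ 8 * (Cq * jb y ^ (-ρ)) * ‖f y‖ :=
      mulVec4_norm_le _ _ (hQ y) _
    have hj := jb_pos y
    have hjf : ‖f y‖ ≤ Cf * jb y ^ (-(2:ℝ)) := hf_bd y
    have hjm : jb y ^ (-ρ) * jb y ^ (-(2:ℝ)) = jb y ^ (-(ρ + 2)) := by
      rw [← Real.rpow_add hj]
      congr 1
      ring
    have hjy : jb y ^ (-(ρ + 2)) ≤ ‖y‖ ^ (-(ρ + 2)) :=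
      Real.rpow_le_rpow_of_nonpos (hR.trans hy1) (norm_le_jb y) (by linarith)
    have h24 := alphaDot_mulVec_le (ω - (‖z‖ ^ 3)⁻¹ • z) (mulVec4 (Q y) (f y))
    have hwnn : (0:ℝ) ≤ ‖mulVec4 (Q y) (f y)‖ := norm_nonneg _
    have hrp : (0:ℝ) ≤ jb y ^ (-ρ) := Real.rpow_nonneg hj.le _
    have hb : ‖mulVec4 (Q y) (f y)‖ ≤ 8 * (Cq * jb y ^ (-ρ)) * (Cf * jb y ^ (-(2:ℝ))) := by
      refine hw2.trans (mul_le_mul_of_nonneg_left hjf ?_)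
      positivity
    calc ‖mulVec4 (alphaDot (ω - (‖z‖ ^ 3)⁻¹ • z)) (mulVec4 (Q y) (f y))‖
        ≤ 24 * ‖ω - (‖z‖ ^ 3)⁻¹ • z‖ * ‖mulVec4 (Q y) (f y)‖ := h24
      _ ≤ 24 * 5 * (8 * (Cq * jb y ^ (-ρ)) * (Cf * jb y ^ (-(2:ℝ)))) := by
          have hstep := mul_le_mul (by linarith : 24 * ‖ω - (‖z‖ ^ 3)⁻¹ • z‖ ≤ 24 * 5)
            hb hwnn (by norm_num)
          linarith
      _ = K * (jb y ^ (-ρ) * jb y ^ (-(2:ℝ))) := by rw [hKdef]; ring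
      _ = K * jb y ^ (-(ρ + 2)) := by rw [hjm]
      _ ≤ K * ‖y‖ ^ (-(ρ + 2)) := mul_le_mul_of_nonneg_left hjy hK0
  -- assemble
  have hR1 : (0:ℝ) ≤ R₀ ^ (-ρ + 1) := Real.rpow_nonneg hR.le _
  calc ‖∫ y in S, mulVec4 (alphaDot (ω - (‖ω - r⁻¹ • y‖ ^ 3)⁻¹ • (ω - r⁻¹ • y)))
          (mulVec4 (Q y) (f y))‖
      ≤ ∫ y in S, K * ‖y‖ ^ (-(ρ + 2)) := by
        apply norm_integral_le_of_norm_le (hIS.const_mul K)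
        filter_upwards [ae_restrict_mem hS] with y hy
        exact hpt y hy
    _ = K * ∫ y in S, ‖y‖ ^ (-(ρ + 2)) := integral_const_mul _ _
    _ ≤ K * ∫ y in T, ‖y‖ ^ (-(ρ + 2)) := by
        refine mul_le_mul_of_nonneg_left ?_ hK0
        exact setIntegral_mono_set hIT
          (ae_of_all _ fun y => Real.rpow_nonneg (norm_nonneg y) _)
          (HasSubset.Subset.eventuallyLE hSsub)
    _ = K * (3 * V * (R₀ ^ (-ρ + 1) / (ρ - 1))) := by
        rw [hTdef, radial_integral ρ R₀ hρ hR]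
    _ ≤ (K * (3 * V / (ρ - 1)) + 1) * R₀ ^ (-ρ + 1) := by
        have heq : K * (3 * V * (R₀ ^ (-ρ + 1) / (ρ - 1)))
            = (K * (3 * V / (ρ - 1))) * R₀ ^ (-ρ + 1) := by ring
        rw [heq]
        nlinarith
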